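/- arXiv:2105.00621 — 2 statements merged into one kernel-verified Lean document; each statement's English description precedes it below -/
import Mathlib

section
/- Let G = (V, E; w) be a graph with strictly positive edge weights. Suppose G is a double-star with centers u and v forming a dominant pair: u and v are adjacent, every vertex of V \ {u, v} is adjacent only to u and/or v, V \ {u, v} is an independent set, and w_{uv} ≥ w_{uu'} + w_{vv'} for all edges uu' and vv' with u', v' ∉ {u, v} (and w_{uv} ≥ w_{uu'} for all edges uu' if v has degree 1, and symmetrically). Then the matching game Γ_G admits a PMAS. -/
open Finset

/-- `M` is a matching of the induced subgraph `G[S]`, given as a finite set of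
(ordered representatives of) edges with endpoints in `S`, pairwise vertex-disjoint. -/
def IsMatchingIn {V : Type*} (G : SimpleGraph V) (S : Finset V)
    (M : Finset (V × V)) : Prop :=
  (∀ p ∈ M, G.Adj p.1 p.2 ∧ p.1 ∈ S ∧ p.2 ∈ S) ∧
  (∀ p ∈ M, ∀ q ∈ M, p ≠ q →
    p.1 ≠ q.1 ∧ p.1 ≠ q.2 ∧ p.2 ≠ q.1 ∧ p.2 ≠ q.2)

/-- `r` is the maximum total weight of a matching in the induced subgraph `G[S]`. -/
def IsMaxMatchingWeight {V : Type*} (G : SimpleGraph V)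
    (w : V → V → ℝ) (S : Finset V) (r : ℝ) : Prop :=
  (∃ M : Finset (V × V), IsMatchingIn G S M ∧ ∑ p ∈ M, w p.1 p.2 = r) ∧
  (∀ M : Finset (V × V), IsMatchingIn G S M → ∑ p ∈ M, w p.1 p.2 ≤ r)

/-- A population monotonic allocation scheme (PMAS): `x S i` is the payoff of player `i`
in coalition `S`.  Efficiency holds for every nonempty coalition, and every player's
payoff is monotone under coalition inclusion. -/
def IsPMAS {N : Type*} [DecidableEq N] (γ : Finset N → ℝ)
    (x : Finset N → N → ℝ) : Prop :=
  (∀ S : Finset N, S.Nonempty → ∑ i ∈ S, x S i = γ S) ∧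
  (∀ S T : Finset N, S ⊆ T → ∀ i ∈ S, x S i ≤ x T i)

open Classical in
/-- Maximum weight of a star edge at center `c`, avoiding the vertex `o`,
within the coalition `S` (0 if there is no such edge). -/
noncomputable def muF {V : Type*} [DecidableEq V] (G : SimpleGraph V) (w : V → V → ℝ)
    (c o : V) (S : Finset V) : ℝ :=
  if h : (S.filter fun z => G.Adj c z ∧ z ≠ o).Nonempty then
    (S.filter fun z => G.Adj c z ∧ z ≠ o).sup' h (fun z => w c z)
  else 0

lemma le_muF {V : Type*} [DecidableEq V] (G : SimpleGraph V) (w : V → V → ℝ)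
    {c o : V} {S : Finset V} {z : V} (hz : z ∈ S) (ha : G.Adj c z) (hno : z ≠ o) :
    w c z ≤ muF G w c o S := by
  classical
  rw [muF]
  have hmem : z ∈ S.filter (fun z => G.Adj c z ∧ z ≠ o) := by
    simp only [Finset.mem_filter]; exact ⟨hz, ha, hno⟩
  rw [dif_pos ⟨z, hmem⟩]
  exact Finset.le_sup' _ hmem

lemma muF_le {V : Type*} [DecidableEq V] (G : SimpleGraph V) (w : V → V → ℝ)
    {c o : V} {S : Finset V} {x : ℝ} (hx : 0 ≤ x)
    (h : ∀ z ∈ S, G.Adj c z → z ≠ o → w c z ≤ x) : muF G w c o S ≤ x := by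
  classical
  rw [muF]
  split_ifs with hne
  · refine Finset.sup'_le _ _ fun z hz => ?_
    simp only [Finset.mem_filter] at hz
    exact h z hz.1 hz.2.1 hz.2.2
  · exact hx

lemma muF_cases {V : Type*} [DecidableEq V] (G : SimpleGraph V) (w : V → V → ℝ)
    (c o : V) (S : Finset V) :
    muF G w c o S = 0 ∨ ∃ z ∈ S, G.Adj c z ∧ z ≠ o ∧ muF G w c o S = w c z := by
  classical
  rw [muF]
  split_ifs with hne
  · right
    obtain ⟨z, hz, he⟩ := Finset.exists_mem_eq_sup' hne (fun z => w c z)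
    simp only [Finset.mem_filter] at hz
    exact ⟨z, hz.1, hz.2.1, hz.2.2, he⟩
  · left; rfl

lemma muF_nonneg {V : Type*} [DecidableEq V] (G : SimpleGraph V) (w : V → V → ℝ)
    (hpos : ∀ a b : V, G.Adj a b → 0 < w a b) (c o : V) (S : Finset V) :
    0 ≤ muF G w c o S := by
  rcases muF_cases G w c o S with h | ⟨z, _, ha, _, he⟩
  · rw [h]
  · rw [he]; exact (hpos c z ha).le

lemma muF_mono {V : Type*} [DecidableEq V] (G : SimpleGraph V) (w : V → V → ℝ)
    (hpos : ∀ a b : V, G.Adj a b → 0 < w a b) (c o : V) {S T : Finset V} (hST : S ⊆ T) :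
    muF G w c o S ≤ muF G w c o T :=
  muF_le G w (muF_nonneg G w hpos c o T)
    (fun z hz ha hno => le_muF G w (hST hz) ha hno)

/-- A matching game on a double-star whose centers form a dominant pair admits a PMAS. -/
theorem matchingGame_doubleStar_pmas {V : Type*} [Fintype V] [DecidableEq V]
    (G : SimpleGraph V) (w : V → V → ℝ)
    (hsym : ∀ a b : V, w a b = w b a)
    (hpos : ∀ a b : V, G.Adj a b → 0 < w a b)
    (γ : Finset V → ℝ)
    (hγ : ∀ S : Finset V, IsMaxMatchingWeight G w S (γ S))
    (u v : V) (huv : G.Adj u v)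
    (hindep : ∀ z z' : V, z ≠ u → z ≠ v → z' ≠ u → z' ≠ v → ¬ G.Adj z z')
    (hdom : ∀ u' v' : V, u' ≠ u → u' ≠ v → v' ≠ u → v' ≠ v →
      G.Adj u u' → G.Adj v v' → w u u' + w v v' ≤ w u v)
    (hdomu : (∀ v' : V, v' ≠ u → ¬ G.Adj v v') →
      ∀ u' : V, u' ≠ v → G.Adj u u' → w u u' ≤ w u v)
    (hdomv : (∀ u' : V, u' ≠ v → ¬ G.Adj u u') →
      ∀ v' : V, v' ≠ u → G.Adj v v' → w v v' ≤ w u v) :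
    ∃ x : Finset V → V → ℝ, IsPMAS γ x := by
  classical
  have hne_uv : u ≠ v := huv.ne
  -- leaf edge weights are dominated by `w u v`
  have leaf_u : ∀ u' : V, u' ≠ v → G.Adj u u' → w u u' ≤ w u v := by
    intro u' h1 h2
    by_cases h : ∃ v' : V, v' ≠ u ∧ G.Adj v v'
    · obtain ⟨v', hv1, hv2⟩ := h
      have := hdom u' v' h2.ne' h1 hv1 hv2.ne' h2 hv2
      linarith [hpos v v' hv2]
    · push_neg at h
      exact hdomu h u' h1 h2
  have leaf_v : ∀ v' : V, v' ≠ u → G.Adj v v' → w v v' ≤ w u v := by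
    intro v' h1 h2
    by_cases h : ∃ u' : V, u' ≠ v ∧ G.Adj u u'
    · obtain ⟨u', hu1, hu2⟩ := h
      have := hdom u' v' hu2.ne' hu1 h1 h2.ne' hu2 h2
      linarith [hpos u u' hu2]
    · push_neg at h
      exact hdomv h v' h1 h2
  have A_le : muF G w u v univ ≤ w u v :=
    muF_le G w (hpos u v huv).le (fun z _ ha hz => leaf_u z hz ha)
  have B_le : muF G w v u univ ≤ w u v :=
    muF_le G w (hpos u v huv).le (fun z _ ha hz => leaf_v z hz ha)
  have key : muF G w u v univ + muF G w v u univ ≤ w u v := by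
    rcases muF_cases G w u v univ with h1 | ⟨a, -, ha, hav, he1⟩
    · rw [h1]; linarith
    rcases muF_cases G w v u univ with h2 | ⟨b, -, hb, hbu, he2⟩
    · rw [h2]; linarith
    rw [he1, he2]
    exact hdom a b ha.ne' hav hbu hb.ne' ha hb
  -- structural facts about matchings
  have htouch : ∀ (S : Finset V) (M : Finset (V × V)), IsMatchingIn G S M →
      ∀ p ∈ M, p.1 = u ∨ p.1 = v ∨ p.2 = u ∨ p.2 = v := by
    intro S M hM p hp
    by_contra h
    push_neg at h
    exact hindep p.1 p.2 h.1 h.2.1 h.2.2.1 h.2.2.2 (hM.1 p hp).1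
  have huniq : ∀ (S : Finset V) (M : Finset (V × V)), IsMatchingIn G S M →
      ∀ a : V, ∀ p ∈ M, ∀ q ∈ M, (p.1 = a ∨ p.2 = a) → (q.1 = a ∨ q.2 = a) → p = q := by
    intro S M hM a p hp q hq h1 h2
    by_contra hne
    obtain ⟨e1, e2, e3, e4⟩ := hM.2 p hp q hq hne
    rcases h1 with h1 | h1 <;> rcases h2 with h2 | h2
    · exact e1 (h1.trans h2.symm)
    · exact e2 (h1.trans h2.symm)
    · exact e3 (h1.trans h2.symm)
    · exact e4 (h1.trans h2.symm)
  have form : ∀ (S : Finset V) (M : Finset (V × V)), IsMatchingIn G S M →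
      ∀ p ∈ M, ∀ c o : V, (p.1 = c ∨ p.2 = c) → p.1 ≠ o → p.2 ≠ o →
      ∃ a, a ∈ S ∧ G.Adj c a ∧ a ≠ o ∧ w p.1 p.2 = w c a := by
    intro S M hM p hp c o h h1 h2
    rcases h with h | h
    · exact ⟨p.2, (hM.1 p hp).2.2, h ▸ (hM.1 p hp).1, h2, by rw [h]⟩
    · refine ⟨p.1, (hM.1 p hp).2.1, ?_, h1, ?_⟩
      · have := (hM.1 p hp).1
        rw [h] at this
        exact this.symm
      · rw [h]; exact hsym p.1 c
  -- upper bounds on matching weights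
  have bound_both : ∀ (S : Finset V) (M : Finset (V × V)), u ∈ S → v ∈ S →
      IsMatchingIn G S M → ∑ p ∈ M, w p.1 p.2 ≤ w u v := by
    intro S M hu hv hM
    by_cases hcase : ∃ p ∈ M, (p.1 = u ∨ p.2 = u) ∧ (p.1 = v ∨ p.2 = v)
    · obtain ⟨p, hp, hpu, hpv⟩ := hcase
      have hMeq : M = {p} := by
        refine Finset.eq_singleton_iff_unique_mem.mpr ⟨hp, fun q hq => ?_⟩
        by_contra hne
        obtain ⟨e1, e2, e3, e4⟩ := hM.2 q hq p hp hne
        rcases htouch S M hM q hq with h | h | h | h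
        · rcases hpu with h' | h'
          · exact e1 (h.trans h'.symm)
          · exact e2 (h.trans h'.symm)
        · rcases hpv with h' | h'
          · exact e1 (h.trans h'.symm)
          · exact e2 (h.trans h'.symm)
        · rcases hpu with h' | h'
          · exact e3 (h.trans h'.symm)
          · exact e4 (h.trans h'.symm)
        · rcases hpv with h' | h'
          · exact e3 (h.trans h'.symm)
          · exact e4 (h.trans h'.symm)
      rw [hMeq, Finset.sum_singleton]
      rcases hpu with h1 | h1 <;> rcases hpv with h2 | h2
      · exact absurd (h1.symm.trans h2) hne_uv
      · rw [h1, h2]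
      · rw [h1, h2, hsym]
      · exact absurd (h1.symm.trans h2) hne_uv
    · push_neg at hcase
      by_cases hu' : ∃ p ∈ M, p.1 = u ∨ p.2 = u
      · by_cases hv' : ∃ q ∈ M, q.1 = v ∨ q.2 = v
        · obtain ⟨p, hp, hpu⟩ := hu'
          obtain ⟨q, hq, hqv⟩ := hv'
          obtain ⟨hp1v, hp2v⟩ := hcase p hp hpu
          have hpq : p ≠ q := by
            rintro rfl
            rcases hqv with h | h
            · exact hp1v h
            · exact hp2v h
          have hq1u : q.1 ≠ u := fun e => hpq (huniq S M hM u p hp q hq hpu (Or.inl e))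
          have hq2u : q.2 ≠ u := fun e => hpq (huniq S M hM u p hp q hq hpu (Or.inr e))
          have hMeq : M = {p, q} := by
            apply Finset.Subset.antisymm
            · intro r hr
              simp only [Finset.mem_insert, Finset.mem_singleton]
              rcases htouch S M hM r hr with h | h | h | h
              · exact Or.inl (huniq S M hM u r hr p hp (Or.inl h) hpu)
              · exact Or.inr (huniq S M hM v r hr q hq (Or.inl h) hqv)
              · exact Or.inl (huniq S M hM u r hr p hp (Or.inr h) hpu)
              · exact Or.inr (huniq S M hM v r hr q hq (Or.inr h) hqv)
            · intro r hr
              simp only [Finset.mem_insert, Finset.mem_singleton] at hr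
              rcases hr with rfl | rfl
              · exact hp
              · exact hq
          rw [hMeq, Finset.sum_pair hpq]
          obtain ⟨a, -, ha, hav, hea⟩ := form S M hM p hp u v hpu hp1v hp2v
          obtain ⟨b, -, hb, hbu, heb⟩ := form S M hM q hq v u hqv hq1u hq2u
          rw [hea, heb]
          exact hdom a b ha.ne' hav hbu hb.ne' ha hb
        · push_neg at hv'
          rcases Finset.eq_empty_or_nonempty M with rfl | ⟨p, hp⟩
          · simpa using (hpos u v huv).le
          · have hpu : p.1 = u ∨ p.2 = u := by
              rcases htouch S M hM p hp with h | h | h | h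
              · exact Or.inl h
              · exact absurd h (hv' p hp).1
              · exact Or.inr h
              · exact absurd h (hv' p hp).2
            have hMeq : M = {p} := Finset.eq_singleton_iff_unique_mem.mpr ⟨hp, fun q hq => by
              have hqu : q.1 = u ∨ q.2 = u := by
                rcases htouch S M hM q hq with h | h | h | h
                · exact Or.inl h
                · exact absurd h (hv' q hq).1
                · exact Or.inr h
                · exact absurd h (hv' q hq).2
              exact huniq S M hM u q hq p hp hqu hpu⟩
            rw [hMeq, Finset.sum_singleton]
            obtain ⟨a, -, ha, hav, hea⟩ := form S M hM p hp u v hpu (hv' p hp).1 (hv' p hp).2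
            rw [hea]
            exact leaf_u a hav ha
      · push_neg at hu'
        rcases Finset.eq_empty_or_nonempty M with rfl | ⟨p, hp⟩
        · simpa using (hpos u v huv).le
        · have hpv : p.1 = v ∨ p.2 = v := by
            rcases htouch S M hM p hp with h | h | h | h
            · exact absurd h (hu' p hp).1
            · exact Or.inl h
            · exact absurd h (hu' p hp).2
            · exact Or.inr h
          have hMeq : M = {p} := Finset.eq_singleton_iff_unique_mem.mpr ⟨hp, fun q hq => by
            have hqv : q.1 = v ∨ q.2 = v := by
              rcases htouch S M hM q hq with h | h | h | h
              · exact absurd h (hu' q hq).1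
              · exact Or.inl h
              · exact absurd h (hu' q hq).2
              · exact Or.inr h
            exact huniq S M hM v q hq p hp hqv hpv⟩
          rw [hMeq, Finset.sum_singleton]
          obtain ⟨a, -, ha, hau, hea⟩ := form S M hM p hp v u hpv (hu' p hp).1 (hu' p hp).2
          rw [hea]
          exact leaf_v a hau ha
  have bound_u : ∀ (S : Finset V) (M : Finset (V × V)), v ∉ S →
      IsMatchingIn G S M → ∑ p ∈ M, w p.1 p.2 ≤ muF G w u v S := by
    intro S M hv hM
    have hall : ∀ p ∈ M, p.1 = u ∨ p.2 = u := by
      intro p hp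
      rcases htouch S M hM p hp with h | h | h | h
      · exact Or.inl h
      · exact absurd (h ▸ (hM.1 p hp).2.1) hv
      · exact Or.inr h
      · exact absurd (h ▸ (hM.1 p hp).2.2) hv
    rcases Finset.eq_empty_or_nonempty M with rfl | ⟨p, hp⟩
    · simpa using muF_nonneg G w hpos u v S
    · have hMeq : M = {p} := Finset.eq_singleton_iff_unique_mem.mpr
        ⟨hp, fun q hq => huniq S M hM u q hq p hp (hall q hq) (hall p hp)⟩
      rw [hMeq, Finset.sum_singleton]
      obtain ⟨a, haS, ha, hav, hea⟩ := form S M hM p hp u v (hall p hp)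
        (fun e => hv (e ▸ (hM.1 p hp).2.1)) (fun e => hv (e ▸ (hM.1 p hp).2.2))
      rw [hea]
      exact le_muF G w haS ha hav
  have bound_v : ∀ (S : Finset V) (M : Finset (V × V)), u ∉ S →
      IsMatchingIn G S M → ∑ p ∈ M, w p.1 p.2 ≤ muF G w v u S := by
    intro S M hu hM
    have hall : ∀ p ∈ M, p.1 = v ∨ p.2 = v := by
      intro p hp
      rcases htouch S M hM p hp with h | h | h | h
      · exact absurd (h ▸ (hM.1 p hp).2.1) hu
      · exact Or.inl h
      · exact absurd (h ▸ (hM.1 p hp).2.2) hu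
      · exact Or.inr h
    rcases Finset.eq_empty_or_nonempty M with rfl | ⟨p, hp⟩
    · simpa using muF_nonneg G w hpos v u S
    · have hMeq : M = {p} := Finset.eq_singleton_iff_unique_mem.mpr
        ⟨hp, fun q hq => huniq S M hM v q hq p hp (hall q hq) (hall p hp)⟩
      rw [hMeq, Finset.sum_singleton]
      obtain ⟨a, haS, ha, hau, hea⟩ := form S M hM p hp v u (hall p hp)
        (fun e => hu (e ▸ (hM.1 p hp).2.1)) (fun e => hu (e ▸ (hM.1 p hp).2.2))
      rw [hea]
      exact le_muF G w haS ha hau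
  have bound_none : ∀ (S : Finset V) (M : Finset (V × V)), u ∉ S → v ∉ S →
      IsMatchingIn G S M → ∑ p ∈ M, w p.1 p.2 ≤ 0 := by
    intro S M hu hv hM
    have : M = ∅ := by
      refine Finset.eq_empty_of_forall_notMem fun p hp => ?_
      rcases htouch S M hM p hp with h | h | h | h
      · exact hu (h ▸ (hM.1 p hp).2.1)
      · exact hv (h ▸ (hM.1 p hp).2.1)
      · exact hu (h ▸ (hM.1 p hp).2.2)
      · exact hv (h ▸ (hM.1 p hp).2.2)
    simp [this]
  -- achieving matchings
  have matching_empty : ∀ S : Finset V, IsMatchingIn G S ∅ :=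
    fun S => ⟨fun p hp => absurd hp (Finset.notMem_empty p),
              fun p hp => absurd hp (Finset.notMem_empty p)⟩
  have matching_singleton : ∀ (S : Finset V) (a b : V), G.Adj a b → a ∈ S → b ∈ S →
      IsMatchingIn G S {(a, b)} := by
    intro S a b hab ha hb
    constructor
    · intro p hp
      simp only [Finset.mem_singleton] at hp
      subst hp
      exact ⟨hab, ha, hb⟩
    · intro p hp q hq hpq
      simp only [Finset.mem_singleton] at hp hq
      exact absurd (hp.trans hq.symm) hpq
  -- evaluating γ
  have γval : ∀ (S : Finset V) (r : ℝ),
      (∃ M, IsMatchingIn G S M ∧ ∑ p ∈ M, w p.1 p.2 = r) →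
      (∀ M, IsMatchingIn G S M → ∑ p ∈ M, w p.1 p.2 ≤ r) → γ S = r := by
    rintro S r ⟨M1, hM1, hs1⟩ hub
    obtain ⟨⟨M0, hM0, hs0⟩, hub0⟩ := hγ S
    exact le_antisymm (hs0 ▸ hub M0 hM0) (hs1 ▸ hub0 M1 hM1)
  have γboth : ∀ S : Finset V, u ∈ S → v ∈ S → γ S = w u v := fun S hu hv =>
    γval S _ ⟨{(u, v)}, matching_singleton S u v huv hu hv, by simp⟩
      (fun M hM => bound_both S M hu hv hM)
  have γu : ∀ S : Finset V, u ∈ S → v ∉ S → γ S = muF G w u v S := by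
    intro S hu hv
    refine γval S _ ?_ (fun M hM => bound_u S M hv hM)
    rcases muF_cases G w u v S with h | ⟨z, hz, ha, hzv, he⟩
    · exact ⟨∅, matching_empty S, by simp [h]⟩
    · exact ⟨{(u, z)}, matching_singleton S u z ha hu hz, by simp [he]⟩
  have γv : ∀ S : Finset V, u ∉ S → v ∈ S → γ S = muF G w v u S := by
    intro S hu hv
    refine γval S _ ?_ (fun M hM => bound_v S M hu hM)
    rcases muF_cases G w v u S with h | ⟨z, hz, ha, hzu, he⟩
    · exact ⟨∅, matching_empty S, by simp [h]⟩
    · exact ⟨{(v, z)}, matching_singleton S v z ha hv hz, by simp [he]⟩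
  have γnone : ∀ S : Finset V, u ∉ S → v ∉ S → γ S = 0 := fun S hu hv =>
    le_antisymm ((hγ S).1.elim fun M hM => hM.2 ▸ bound_none S M hu hv hM.1)
      (by
        obtain ⟨-, hub0⟩ := hγ S
        have := hub0 ∅ (matching_empty S)
        -- γ S ≥ 0 from the empty matching
        calc (0:ℝ) = ∑ p ∈ (∅ : Finset (V × V)), w p.1 p.2 := by simp
        _ ≤ γ S := hub0 ∅ (matching_empty S))
  -- the allocation scheme
  refine ⟨fun S i =>
    (if i = u then (if u ∈ S then (if v ∈ S then muF G w u v univ else muF G w u v S) else 0)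
      else 0) +
    (if i = v then (if v ∈ S then (if u ∈ S then w u v - muF G w u v univ else muF G w v u S)
      else 0) else 0), ?_, ?_⟩
  · -- efficiency
    intro S _
    rw [Finset.sum_add_distrib, Finset.sum_ite_eq', Finset.sum_ite_eq']
    by_cases hu : u ∈ S <;> by_cases hv : v ∈ S
    · rw [γboth S hu hv]; simp only [if_pos hu, if_pos hv]; ring
    · rw [γu S hu hv]; simp [hu, hv]
    · rw [γv S hu hv]; simp [hu, hv]
    · rw [γnone S hu hv]; simp [hu, hv]
  · -- monotonicity
    intro S T hST i hiS
    by_cases hiu : i = u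
    · have hiv : i ≠ v := fun e => hne_uv (hiu.symm.trans e)
      have huS : u ∈ S := hiu ▸ hiS
      have huT : u ∈ T := hST huS
      simp only [if_pos hiu, if_neg hiv, if_pos huS, if_pos huT, add_zero]
      by_cases hvS : v ∈ S
      · simp [hvS, hST hvS]
      · by_cases hvT : v ∈ T
        · rw [if_neg hvS, if_pos hvT]
          exact muF_mono G w hpos u v (Finset.subset_univ S)
        · rw [if_neg hvS, if_neg hvT]
          exact muF_mono G w hpos u v hST
    · by_cases hiv : i = v
      · have hvS : v ∈ S := hiv ▸ hiS
        have hvT : v ∈ T := hST hvS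
        simp only [if_neg hiu, if_pos hiv, if_pos hvS, if_pos hvT, zero_add]
        by_cases huS : u ∈ S
        · simp [huS, hST huS]
        · by_cases huT : u ∈ T
          · rw [if_neg huS, if_pos huT]
            have h1 : muF G w v u S ≤ muF G w v u univ :=
              muF_mono G w hpos v u (Finset.subset_univ S)
            linarith
          · rw [if_neg huS, if_neg huT]
            exact muF_mono G w hpos v u hST
      · simp [hiu, hiv]
end

section
/- Let G be a connected, finite simple graph on at least two vertices that has no induced subgraph isomorphic to P_4 (path on 4 vertices), C_4, K_4, or the paw (triangle with a pendant edge). Then G is a double-star: there exist adjacent vertices u and v such that V \ {u, v} is an independent set and every vertex of V \ {u, v} is adjacent only to u and/or v. -/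
open Finset

/-- A connected graph on at least two vertices with no induced P₄, C₄, K₄ or paw is a
double-star. -/
theorem doubleStar_of_forbidden_subgraphs {V : Type*} [Fintype V]
    (G : SimpleGraph V) (hconn : G.Connected) (hcard : 2 ≤ Fintype.card V)
    (hP4 : ¬ ∃ a b c d : V,
      a ≠ b ∧ a ≠ c ∧ a ≠ d ∧ b ≠ c ∧ b ≠ d ∧ c ≠ d ∧
      G.Adj a b ∧ G.Adj b c ∧ G.Adj c d ∧ ¬ G.Adj a c ∧ ¬ G.Adj a d ∧ ¬ G.Adj b d)
    (hC4 : ¬ ∃ a b c d : V,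
      a ≠ b ∧ a ≠ c ∧ a ≠ d ∧ b ≠ c ∧ b ≠ d ∧ c ≠ d ∧
      G.Adj a b ∧ G.Adj b c ∧ G.Adj c d ∧ G.Adj a d ∧ ¬ G.Adj a c ∧ ¬ G.Adj b d)
    (hK4 : ¬ ∃ a b c d : V,
      a ≠ b ∧ a ≠ c ∧ a ≠ d ∧ b ≠ c ∧ b ≠ d ∧ c ≠ d ∧
      G.Adj a b ∧ G.Adj a c ∧ G.Adj a d ∧ G.Adj b c ∧ G.Adj b d ∧ G.Adj c d)
    (hPaw : ¬ ∃ a b c d : V,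
      a ≠ b ∧ a ≠ c ∧ a ≠ d ∧ b ≠ c ∧ b ≠ d ∧ c ≠ d ∧
      G.Adj a b ∧ G.Adj b c ∧ G.Adj b d ∧ G.Adj c d ∧ ¬ G.Adj a c ∧ ¬ G.Adj a d) :
    ∃ u v : V, G.Adj u v ∧
      (∀ z : V, z ≠ u → z ≠ v → (G.Adj z u ∨ G.Adj z v)) ∧
      (∀ z z' : V, z ≠ u → z ≠ v → z' ≠ u → z' ≠ v → ¬ G.Adj z z') := by
  classical
  -- a pendant vertex `a` attached to a triangle `b c d` gives a paw
  have pawF : ∀ a b c d : V, G.Adj a b → G.Adj b c → G.Adj b d → G.Adj c d →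
      ¬G.Adj a c → ¬G.Adj a d → False := by
    intro a b c d hab hbc hbd hcd hac had
    have hacne : a ≠ c := fun h => had (h ▸ hcd)
    have hadne : a ≠ d := fun h => hac (h ▸ hcd.symm)
    exact hPaw ⟨a, b, c, d, hab.ne, hacne, hadne, hbc.ne, hbd.ne, hcd.ne,
      hab, hbc, hbd, hcd, hac, had⟩
  -- a path a-b-c-d with non-edges ac, bd gives a P4 or a C4
  have pathF : ∀ a b c d : V, a ≠ c → b ≠ d → a ≠ d →
      G.Adj a b → G.Adj b c → G.Adj c d → ¬G.Adj a c → ¬G.Adj b d → False := by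
    intro a b c d hac' hbd' had' hab hbc hcd hac hbd
    by_cases had : G.Adj a d
    · exact hC4 ⟨a, b, c, d, hab.ne, hac', had', hbc.ne, hbd', hcd.ne,
        hab, hbc, hcd, had, hac, hbd⟩
    · exact hP4 ⟨a, b, c, d, hab.ne, hac', had', hbc.ne, hbd', hcd.ne,
        hab, hbc, hcd, hac, had, hbd⟩
  -- two vertices attached to different sides of an edge p q give P4/C4
  have diff : ∀ p q x y : V, x ≠ y → x ≠ q → y ≠ p → G.Adj p q →
      G.Adj x p → ¬G.Adj x q → G.Adj y q → ¬G.Adj y p → False := by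
    intro p q x y hxy hxq' hyp' hpq hxp hxq hyq hyp
    exact pathF x p q y hxq' (Ne.symm hyp') hxy hxp hpq hyq.symm hxq
      (fun e => hyp e.symm)
  -- every vertex is adjacent to an endpoint of any fixed edge
  have cover : ∀ u v : V, G.Adj u v → ∀ n : ℕ, ∀ z : V, z ≠ u → z ≠ v →
      ∀ p : G.Walk z u, p.length ≤ n → G.Adj z u ∨ G.Adj z v := by
    intro u v huv n
    induction n with
    | zero =>
      intro z hzu _ p hp
      cases p with
      | nil => exact absurd rfl hzu
      | cons h q => simp [SimpleGraph.Walk.length_cons] at hp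
    | succ n ih =>
      intro z hzu hzv p hp
      cases p with
      | nil => exact absurd rfl hzu
      | @cons _ y _ h q =>
      have hq : q.length ≤ n := by
        simp [SimpleGraph.Walk.length_cons] at hp; omega
      by_cases hyu : y = u
      · exact Or.inl (hyu ▸ h)
      by_cases hyv : y = v
      · exact Or.inr (hyv ▸ h)
      by_cases hzu' : G.Adj z u
      · exact Or.inl hzu'
      by_cases hzv' : G.Adj z v
      · exact Or.inr hzv'
      exfalso
      rcases ih y hyu hyv q hq with hy | hy
      · by_cases hyv2 : G.Adj y v
        · exact pawF z y u v h hy hyv2 huv hzu' hzv'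
        · exact pathF v u y z (Ne.symm hyv) (Ne.symm hzu)
            (Ne.symm hzv) huv.symm hy.symm h.symm (fun e => hyv2 e.symm)
            (fun e => hzu' e.symm)
      · by_cases hyu2 : G.Adj y u
        · exact pawF z y v u h hy hyu2 huv.symm hzv' hzu'
        · exact pathF u v y z (Ne.symm hyu) (Ne.symm hzv) (Ne.symm hzu)
            huv hy.symm h.symm (fun e => hyu2 e.symm) (fun e => hzv' e.symm)
  have coverV : ∀ u v : V, G.Adj u v → ∀ z : V, z ≠ u → z ≠ v →
      G.Adj z u ∨ G.Adj z v := by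
    intro u v huv z hzu hzv
    obtain ⟨p⟩ := hconn.preconnected z u
    exact cover u v huv p.length z hzu hzv p le_rfl
  -- get an edge
  obtain ⟨x, y, hxy⟩ := Fintype.exists_pair_of_one_lt_card (by omega : 1 < Fintype.card V)
  obtain ⟨p⟩ := hconn.preconnected x y
  have hedge : ∃ u v : V, G.Adj u v := by
    cases p with
    | nil => exact absurd rfl hxy
    | cons h _ => exact ⟨_, _, h⟩
  obtain ⟨u, v, huv⟩ := hedge
  by_cases hw : ∃ w, w ≠ u ∧ w ≠ v ∧ G.Adj w u ∧ G.Adj w v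
  · -- there is a triangle u v w
    obtain ⟨w, hwu, hwv, hw1, hw2⟩ := hw
    -- every other vertex is attached to exactly two of u, v, w
    have S : ∀ x : V, x ≠ u → x ≠ v → x ≠ w →
        (G.Adj x u ∧ G.Adj x v ∧ ¬G.Adj x w) ∨ (G.Adj x u ∧ G.Adj x w ∧ ¬G.Adj x v) ∨
        (G.Adj x v ∧ G.Adj x w ∧ ¬G.Adj x u) := by
      intro x hxu hxv hxw
      have hc := coverV u v huv x hxu hxv
      by_cases h1 : G.Adj x u <;> by_cases h2 : G.Adj x v <;> by_cases h3 : G.Adj x w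
      · exact absurd ⟨x, u, v, w, hxu, hxv, hxw, huv.ne, Ne.symm hwu, Ne.symm hwv,
          h1, h2, h3, huv, hw1.symm, hw2.symm⟩ hK4
      · exact Or.inl ⟨h1, h2, h3⟩
      · exact Or.inr (Or.inl ⟨h1, h3, h2⟩)
      · exact (pawF x u v w h1 huv hw1.symm hw2.symm h2 h3).elim
      · exact Or.inr (Or.inr ⟨h2, h3, h1⟩)
      · exact (pawF x v u w h2 huv.symm hw2.symm hw1.symm h1 h3).elim
      · exact (hc.elim h1 h2).elim
      · exact (hc.elim h1 h2).elim
    -- the general step: with a triangle a b c and a vertex x₀ attached to a, b only,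
    -- the pair (a, b) is the pair of centers
    have main : ∀ a b c x₀ : V, G.Adj a b → G.Adj c a → G.Adj c b →
        (∀ x : V, x ≠ a → x ≠ b → x ≠ c →
          (G.Adj x a ∧ G.Adj x b ∧ ¬G.Adj x c) ∨ (G.Adj x a ∧ G.Adj x c ∧ ¬G.Adj x b) ∨
          (G.Adj x b ∧ G.Adj x c ∧ ¬G.Adj x a)) →
        x₀ ≠ c → G.Adj x₀ a → G.Adj x₀ b → ¬G.Adj x₀ c →
        (∀ z : V, z ≠ a → z ≠ b → G.Adj z a ∨ G.Adj z b) →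
        ∃ u v : V, G.Adj u v ∧
          (∀ z : V, z ≠ u → z ≠ v → (G.Adj z u ∨ G.Adj z v)) ∧
          (∀ z z' : V, z ≠ u → z ≠ v → z' ≠ u → z' ≠ v → ¬ G.Adj z z') := by
      intro a b c x₀ hab hca hcb S0 hx0c ha hb hc cov
      have key : ∀ z : V, z ≠ a → z ≠ b → z ≠ c → G.Adj z a ∧ G.Adj z b ∧ ¬G.Adj z c := by
        intro z p q r
        rcases S0 z p q r with h | ⟨h1, h2, h3⟩ | ⟨h1, h2, h3⟩
        · exact h
        · exact (diff b c x₀ z (fun e => h3 (e ▸ hb)) hx0c q hcb.symm hb hc h2 h3).elim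
        · exact (diff a c x₀ z (fun e => h3 (e ▸ ha)) hx0c p hca.symm ha hc h2 h3).elim
      refine ⟨a, b, hab, cov, fun z z' hz1 hz2 hz1' hz2' hadj => ?_⟩
      by_cases hzc : z = c
      · rw [hzc] at hadj
        have hz'c : z' ≠ c := fun e => G.loopless.irrefl c (e ▸ hadj)
        exact (key z' hz1' hz2' hz'c).2.2 hadj.symm
      by_cases hz'c : z' = c
      · rw [hz'c] at hadj
        exact (key z hz1 hz2 hzc).2.2 hadj
      · obtain ⟨hza, hzb, -⟩ := key z hz1 hz2 hzc
        obtain ⟨hz'a, hz'b, -⟩ := key z' hz1' hz2' hz'c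
        exact hK4 ⟨a, b, z, z', hab.ne, Ne.symm hz1, Ne.symm hz1', Ne.symm hz2,
          Ne.symm hz2', hadj.ne, hab, hza.symm, hz'a.symm, hzb.symm, hz'b.symm, hadj⟩
    by_cases hx : ∃ x : V, x ≠ u ∧ x ≠ v ∧ x ≠ w
    · obtain ⟨x₀, h1, h2, h3⟩ := hx
      rcases S x₀ h1 h2 h3 with ⟨ha, hb, hc⟩ | ⟨ha, hb, hc⟩ | ⟨ha, hb, hc⟩
      · exact main u v w x₀ huv hw1 hw2 S h3 ha hb hc
          (fun z p q => coverV u v huv z p q)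
      · refine main u w v x₀ hw1.symm huv.symm hw2.symm ?_ h2 ha hb hc
          (fun z p q => coverV u w hw1.symm z p q)
        intro x p q r
        rcases S x p r q with h | h | h <;> tauto
      · refine main v w u x₀ hw2.symm huv hw1.symm ?_ h1 ha hb hc
          (fun z p q => coverV v w hw2.symm z p q)
        intro x p q r
        rcases S x r p q with h | h | h <;> tauto
    · -- V = {u, v, w}
      have all : ∀ z : V, z ≠ u → z ≠ v → z = w := by
        intro z p q
        by_contra h3
        exact hx ⟨z, p, q, h3⟩
      refine ⟨u, v, huv, fun z p q => coverV u v huv z p q,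
        fun z z' p q p' q' hadj => ?_⟩
      rw [all z p q, all z' p' q'] at hadj
      exact G.loopless.irrefl w hadj
  · -- u and v have no common neighbour: u, v are the centers
    have nocom : ∀ z : V, G.Adj z u → G.Adj z v → False := fun z h1 h2 =>
      hw ⟨z, h1.ne, h2.ne, h1, h2⟩
    refine ⟨u, v, huv, fun z p q => coverV u v huv z p q,
      fun z z' hzu hzv hz'u hz'v hadj => ?_⟩
    rcases coverV u v huv z hzu hzv with h1 | h1 <;>
      rcases coverV u v huv z' hz'u hz'v with h2 | h2
    · exact pawF v u z z' huv.symm h1.symm h2.symm hadj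
        (fun e => nocom z h1 e.symm) (fun e => nocom z' h2 e.symm)
    · exact pathF z u v z' hzv (Ne.symm hz'u) hadj.ne h1 huv h2.symm
        (fun e => nocom z h1 e) (fun e => nocom z' e.symm h2)
    · exact pathF z' u v z hz'v (Ne.symm hzu) hadj.ne.symm h2 huv h1.symm
        (fun e => nocom z' h2 e) (fun e => nocom z e.symm h1)
    · exact pawF u v z z' huv h1.symm h2.symm hadj
        (fun e => nocom z e.symm h1) (fun e => nocom z' e.symm h2)
end
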